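/- Let (S_n)_{n≥0} be a square integrable martingale adapted to a filtration (F_n) with S_0 = 0, which is conditionally symmetric: for each n ≥ 1, the conditional law of S_n - S_{n-1} given F_{n-1} equals the conditional law of -(S_n - S_{n-1}) given F_{n-1}. Then for all x > 0 and y > 0, P(S_n ≥ x and Σ_{i=1}^n (S_i - S_{i-1})² ≤ y) ≤ exp(-x²/(2y)). -/

import Mathlib

open MeasureTheory Finset

theorem de_la_pena_discrete
    {Ω : Type*} {m : MeasurableSpace Ω} {μ : Measure Ω} [IsProbabilityMeasure μ]
    (F : Filtration ℕ m) (S : ℕ → Ω → ℝ)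
    (hmart : Martingale S F μ)
    (hL2 : ∀ n, MemLp (S n) 2 μ)
    (h0 : S 0 = 0)
    (hsymm : ∀ n, ∀ g : ℝ → ℝ, Measurable g → (∃ C, ∀ y, |g y| ≤ C) →
      μ[fun ω => g (S (n + 1) ω - S n ω) | F n]
        =ᵐ[μ] μ[fun ω => g (-(S (n + 1) ω - S n ω)) | F n])
    (n : ℕ) (x y : ℝ) (hx : 0 < x) (hy : 0 < y) :
    μ {ω | x ≤ S n ω ∧ ∑ i ∈ range n, (S (i + 1) ω - S i ω) ^ 2 ≤ y}
      ≤ ENNReal.ofReal (Real.exp (-x ^ 2 / (2 * y))) := by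
  set l : ℝ := x / y with hl
  have hlpos : 0 < l := div_pos hx hy
  set f : ℝ → ℝ := fun u => Real.exp (l * u - l ^ 2 * u ^ 2 / 2) with hfdef
  have hf_meas : Measurable f := by
    apply Real.measurable_exp.comp
    exact (measurable_const.mul measurable_id).sub
      ((measurable_const.mul (measurable_id.pow_const 2)).div_const 2)
  have hf_pos : ∀ u, 0 < f u := fun u => Real.exp_pos _
  have hf_le : ∀ u, f u ≤ Real.exp (1 / 2) := by
    intro u
    apply Real.exp_le_exp.2
    nlinarith [sq_nonneg (l * u - 1)]
  have hf_bdd : ∀ u, |f u| ≤ Real.exp (1 / 2) := fun u => by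
    rw [abs_of_pos (hf_pos u)]; exact hf_le u
  have hcosh : ∀ u, f u + f (-u) ≤ 2 := by
    intro u
    have key : Real.exp (l * u) + Real.exp (-(l * u)) ≤ 2 * Real.exp ((l * u) ^ 2 / 2) := by
      have h := Real.cosh_le_exp_half_sq (l * u)
      rw [Real.cosh_eq] at h; linarith
    have e1 : f u = Real.exp (l * u) * Real.exp (-((l * u) ^ 2 / 2)) := by
      rw [← Real.exp_add]; simp only [hfdef]; congr 1; ring
    have e2 : f (-u) = Real.exp (-(l * u)) * Real.exp (-((l * u) ^ 2 / 2)) := by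
      rw [← Real.exp_add]; simp only [hfdef]; congr 1; ring
    rw [e1, e2, ← add_mul]
    calc (Real.exp (l * u) + Real.exp (-(l * u))) * Real.exp (-((l * u) ^ 2 / 2))
        ≤ (2 * Real.exp ((l * u) ^ 2 / 2)) * Real.exp (-((l * u) ^ 2 / 2)) :=
          mul_le_mul_of_nonneg_right key (Real.exp_nonneg _)
      _ = 2 := by rw [mul_assoc, ← Real.exp_add]; simp
  set D : ℕ → Ω → ℝ := fun i ω => S (i + 1) ω - S i ω with hD
  set M : ℕ → Ω → ℝ := fun k ω => ∏ i ∈ range k, f (D i ω) with hM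
  have hS_meas : ∀ i, StronglyMeasurable[F i] (S i) := fun i => hmart.stronglyAdapted i
  have hD_meas : ∀ i, Measurable[F (i + 1)] (D i) := fun i =>
    ((hS_meas (i + 1)).measurable.sub
      ((hS_meas i).mono (F.mono (Nat.le_succ i))).measurable)
  have hD_meas' : ∀ i, Measurable (D i) := fun i => (hD_meas i).mono (F.le _) le_rfl
  have hM_meas : ∀ k, StronglyMeasurable[F k] (M k) := by
    intro k
    apply Finset.stronglyMeasurable_fun_prod
    intro i hi
    have hik : i + 1 ≤ k := Finset.mem_range.1 hi
    exact ((hf_meas.comp ((hD_meas i).mono (F.mono hik) le_rfl))).stronglyMeasurable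
  have hM_meas' : ∀ k, Measurable (M k) := fun k =>
    ((hM_meas k).measurable).mono (F.le _) le_rfl
  have hM_pos : ∀ k ω, 0 < M k ω := fun k ω =>
    Finset.prod_pos fun i _ => hf_pos _
  have hM_bdd : ∀ k ω, M k ω ≤ Real.exp (1 / 2) ^ k := by
    intro k ω
    calc M k ω ≤ ∏ _i ∈ range k, Real.exp (1 / 2) :=
          Finset.prod_le_prod (fun i _ => (hf_pos _).le) (fun i _ => hf_le _)
      _ = Real.exp (1 / 2) ^ k := by rw [Finset.prod_const, Finset.card_range]
  -- integrability helper
  have hint : ∀ (g : Ω → ℝ) (C : ℝ), Measurable g → (∀ ω, |g ω| ≤ C) → Integrable g μ := by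
    intro g C hg hb
    refine ⟨hg.aestronglyMeasurable, HasFiniteIntegral.of_bounded (C := C) ?_⟩
    exact Filter.Eventually.of_forall fun ω => by simpa [Real.norm_eq_abs] using hb ω
  have hfd_int : ∀ i, Integrable (fun ω => f (D i ω)) μ := fun i =>
    hint _ (Real.exp (1 / 2)) (hf_meas.comp (hD_meas' i)) fun ω => hf_bdd _
  have hM_int : ∀ k, Integrable (M k) μ := fun k =>
    hint _ (Real.exp (1 / 2) ^ k) (hM_meas' k) fun ω => by
      rw [abs_of_pos (hM_pos k ω)]; exact hM_bdd k ω
  -- conditional expectation of each factor is ≤ 1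
  have hcond : ∀ k, ∀ᵐ ω ∂μ, (μ[fun ω => f (D k ω)|F k]) ω ≤ 1 := by
    intro k
    have hsym := hsymm k f hf_meas ⟨Real.exp (1 / 2), hf_bdd⟩
    have hg2_int : Integrable (fun ω => f (-(D k ω))) μ :=
      hint _ (Real.exp (1 / 2)) (hf_meas.comp (hD_meas' k).neg) fun ω => hf_bdd _
    have hadd := condExp_add (m := F k) (hfd_int k) hg2_int
    have hsum_int : Integrable (fun ω => f (D k ω) + f (-(D k ω))) μ := (hfd_int k).add hg2_int
    have hmono := condExp_mono (m := F k) hsum_int (integrable_const (2 : ℝ))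
      (Filter.Eventually.of_forall fun ω => hcosh (D k ω))
    have hconst : μ[(fun _ => (2 : ℝ))|F k] = fun _ => (2 : ℝ) := condExp_const (F.le k) 2
    rw [hconst] at hmono
    filter_upwards [hsym, hadd, hmono] with ω h1 h2 h3
    have : (μ[fun ω => f (D k ω)|F k]) ω + (μ[fun ω => f (-(D k ω))|F k]) ω ≤ 2 := by
      rw [← Pi.add_apply, ← h2]; exact h3
    have h1' : (μ[fun ω => f (D k ω)|F k]) ω = (μ[fun ω => f (-(D k ω))|F k]) ω := h1
    linarith
  -- E[M k] ≤ 1 by induction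
  have hMle : ∀ k, ∫ ω, M k ω ∂μ ≤ 1 := by
    intro k
    induction k with
    | zero => simp [hM]
    | succ k ih =>
      have hstep : M (k + 1) = M k * fun ω => f (D k ω) := by
        funext ω; simp [hM, Finset.prod_range_succ]
      have hprod_int : Integrable (M k * fun ω => f (D k ω)) μ := by
        rw [← hstep]; exact hM_int (k + 1)
      have hpull : μ[M k * fun ω => f (D k ω)|F k] =ᵐ[μ]
          M k * μ[fun ω => f (D k ω)|F k] :=
        condExp_mul_of_stronglyMeasurable_left (hM_meas k) hprod_int (hfd_int k)
      have hrhs_int : Integrable (M k * μ[fun ω => f (D k ω)|F k]) μ :=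
        (integrable_condExp).bdd_mul (hM_meas' k).aestronglyMeasurable
          (Filter.Eventually.of_forall (fun ω => by
            rw [Real.norm_eq_abs, abs_of_pos (hM_pos k ω)]; exact hM_bdd k ω))
      have e1 : ∫ ω, M (k + 1) ω ∂μ = ∫ ω, (M k * μ[fun ω => f (D k ω)|F k]) ω ∂μ := by
        rw [hstep]
        calc ∫ ω, (M k * fun ω => f (D k ω)) ω ∂μ
            = ∫ ω, (μ[M k * fun ω => f (D k ω)|F k]) ω ∂μ :=
              (integral_condExp (F.le k)).symm
          _ = ∫ ω, (M k * μ[fun ω => f (D k ω)|F k]) ω ∂μ := integral_congr_ae hpull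
      rw [e1]
      have e2 : ∫ ω, (M k * μ[fun ω => f (D k ω)|F k]) ω ∂μ ≤ ∫ ω, M k ω ∂μ := by
        apply integral_mono_ae hrhs_int (hM_int k)
        filter_upwards [hcond k] with ω h1
        have := mul_le_mul_of_nonneg_left h1 (hM_pos k ω).le
        simpa using this
      linarith
  -- lower bound on M n on the event
  set A := {ω | x ≤ S n ω ∧ ∑ i ∈ range n, (S (i + 1) ω - S i ω) ^ 2 ≤ y} with hA
  have hA_meas : MeasurableSet A := by
    have h1 : MeasurableSet {ω | x ≤ S n ω} :=
      measurableSet_le measurable_const ((hS_meas n).measurable.mono (F.le n) le_rfl)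
    have h2 : MeasurableSet {ω : Ω | ∑ i ∈ range n, (S (i + 1) ω - S i ω) ^ 2 ≤ y} :=
      measurableSet_le (Finset.measurable_sum _ fun i _ => ((hD_meas' i).pow_const 2))
        measurable_const
    rw [hA, Set.setOf_and]
    exact h1.inter h2
  have hlower : ∀ ω ∈ A, Real.exp (x ^ 2 / (2 * y)) ≤ M n ω := by
    rintro ω ⟨h1, h2⟩
    have hMexp : M n ω = Real.exp (∑ i ∈ range n, (l * D i ω - l ^ 2 * (D i ω) ^ 2 / 2)) := by
      rw [Real.exp_sum]
    rw [hMexp, Real.exp_le_exp]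
    have htel : ∑ i ∈ range n, D i ω = S n ω := by
      have := Finset.sum_range_sub (fun i => S i ω) n
      simpa [hD, h0] using this
    have hsum : ∑ i ∈ range n, (l * D i ω - l ^ 2 * (D i ω) ^ 2 / 2)
        = l * S n ω - l ^ 2 / 2 * ∑ i ∈ range n, (D i ω) ^ 2 := by
      have hsum2 : ∑ i ∈ range n, l ^ 2 * (D i ω) ^ 2 / 2
          = l ^ 2 / 2 * ∑ i ∈ range n, (D i ω) ^ 2 := by
        rw [Finset.mul_sum]; exact Finset.sum_congr rfl fun i _ => by ring
      rw [Finset.sum_sub_distrib, ← Finset.mul_sum, htel, hsum2]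
    rw [hsum]
    have hb1 : l * x ≤ l * S n ω := mul_le_mul_of_nonneg_left h1 hlpos.le
    have hb2 : l ^ 2 / 2 * ∑ i ∈ range n, (D i ω) ^ 2 ≤ l ^ 2 / 2 * y :=
      mul_le_mul_of_nonneg_left h2 (by positivity)
    have heq : x ^ 2 / (2 * y) = l * x - l ^ 2 / 2 * y := by
      rw [hl]; field_simp; ring
    linarith
  -- Markov
  have hc : (0 : ℝ) < Real.exp (x ^ 2 / (2 * y)) := Real.exp_pos _
  have hmarkov : (μ A).toReal * Real.exp (x ^ 2 / (2 * y)) ≤ 1 := by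
    calc (μ A).toReal * Real.exp (x ^ 2 / (2 * y))
        = ∫ _ω in A, Real.exp (x ^ 2 / (2 * y)) ∂μ := by
          rw [setIntegral_const, smul_eq_mul, measureReal_def]
      _ ≤ ∫ ω in A, M n ω ∂μ := by
          apply setIntegral_mono_on (integrableOn_const (measure_lt_top μ A).ne)
            ((hM_int n).integrableOn) hA_meas hlower
      _ ≤ ∫ ω, M n ω ∂μ :=
          setIntegral_le_integral (hM_int n) (Filter.Eventually.of_forall fun ω => (hM_pos n ω).le)
      _ ≤ 1 := hMle n
  have hfin : μ A ≠ ⊤ := measure_ne_top μ A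
  rw [← ENNReal.ofReal_toReal hfin]
  apply ENNReal.ofReal_le_ofReal
  have hexp : Real.exp (-x ^ 2 / (2 * y)) = 1 / Real.exp (x ^ 2 / (2 * y)) := by
    rw [one_div, ← Real.exp_neg]; congr 1; ring
  rw [hexp, le_div_iff₀ hc]
  exact hmarkov
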